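/- Let N ≥ 2 and a : ℕ → ℝ with a(k+1) < a(k) for all 1 ≤ k ≤ N−1. Then the function D(p) = Σ_{k=1}^{N} C(N−1, k−1)·p^{k−1}·(1−p)^{N−k}·a(k) is strictly decreasing on the interval [0, 1]. -/

import Mathlib

open Finset in
/-- if `a(k+1) < a(k)` for all `1 ≤ k ≤ N−1`, then
`D(p) = Σ_{k=1}^{N} C(N−1,k−1) p^{k−1} (1−p)^{N−k} a(k)` is strictly
decreasing on `[0, 1]`. -/
theorem bernstein_sum_strictAntiOn
    (N : ℕ) (hN : 2 ≤ N) (a : ℕ → ℝ)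
    (ha : ∀ k, 1 ≤ k → k ≤ N - 1 → a (k + 1) < a k) :
    StrictAntiOn
      (fun p : ℝ => ∑ k ∈ Finset.Icc 1 N,
        ((N - 1).choose (k - 1) : ℝ) * p ^ (k - 1) * (1 - p) ^ (N - k) * a k)
      (Set.Icc 0 1) := by
  obtain ⟨n, rfl⟩ : ∃ n, N = n + 1 := ⟨N - 1, by omega⟩
  have hn : 1 ≤ n := by omega
  set F : ℝ → ℝ := fun p => ∑ i ∈ Finset.range (n + 1),
      (n.choose i : ℝ) * p ^ i * (1 - p) ^ (n - i) * a (i + 1) with hF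
  have hfun : (fun p : ℝ => ∑ k ∈ Finset.Icc 1 (n + 1),
      ((n + 1 - 1).choose (k - 1) : ℝ) * p ^ (k - 1) * (1 - p) ^ (n + 1 - k) * a k) = F := by
    funext p
    rw [hF, ← Finset.Ico_add_one_right_eq_Icc, Finset.sum_Ico_eq_sum_range]
    apply Finset.sum_congr (by norm_num)
    intro i hi
    have h1 : 1 + i - 1 = i := by omega
    have h2 : n + 1 - 1 = n := by omega
    have h3 : n + 1 - (1 + i) = n - i := by omega
    rw [h1, h2, h3, add_comm 1 i]
  rw [hfun]
  -- derivative
  set g : ℝ → ℝ := fun p => ∑ i ∈ Finset.range n,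
      (n : ℝ) * ((n - 1).choose i : ℝ) * p ^ i * (1 - p) ^ (n - 1 - i) * (a (i + 2) - a (i + 1))
      with hg
  have hderiv : ∀ p : ℝ, HasDerivAt F (g p) p := by
    intro p
    have h1 : HasDerivAt (fun q : ℝ => 1 - q) (-1) p := by
      simpa using ((hasDerivAt_id p).const_sub 1)
    have hterm : ∀ i ∈ Finset.range (n + 1), HasDerivAt
        (fun q : ℝ => (n.choose i : ℝ) * q ^ i * (1 - q) ^ (n - i) * a (i + 1))
        (((n.choose i : ℝ) * ((i : ℝ) * p ^ (i - 1)) * (1 - p) ^ (n - i)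
          + (n.choose i : ℝ) * p ^ i * (((n - i : ℕ) : ℝ) * (1 - p) ^ (n - i - 1) * (-1)))
          * a (i + 1)) p := by
      intro i _
      exact ((((hasDerivAt_pow i p).const_mul _).mul (h1.pow _)).mul_const _)
    have hsum := HasDerivAt.fun_sum hterm
    refine hsum.congr_deriv ?_
    -- sum identity
    rw [hg]
    have hsplit : ∀ i ∈ Finset.range (n + 1),
        ((n.choose i : ℝ) * ((i : ℝ) * p ^ (i - 1)) * (1 - p) ^ (n - i)
          + (n.choose i : ℝ) * p ^ i * (((n - i : ℕ) : ℝ) * (1 - p) ^ (n - i - 1) * (-1)))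
          * a (i + 1)
        = (n.choose i : ℝ) * (i : ℝ) * p ^ (i - 1) * (1 - p) ^ (n - i) * a (i + 1)
          - (n.choose i : ℝ) * ((n - i : ℕ) : ℝ) * p ^ i * (1 - p) ^ (n - i - 1) * a (i + 1) := by
      intro i _; ring
    rw [Finset.sum_congr rfl hsplit, Finset.sum_sub_distrib]
    have hA : ∑ i ∈ Finset.range (n + 1),
        (n.choose i : ℝ) * (i : ℝ) * p ^ (i - 1) * (1 - p) ^ (n - i) * a (i + 1)
        = ∑ i ∈ Finset.range n,
        (n : ℝ) * ((n - 1).choose i : ℝ) * p ^ i * (1 - p) ^ (n - 1 - i) * a (i + 2) := by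
      rw [Finset.sum_range_succ']
      simp only [Nat.cast_zero, mul_zero, zero_mul, add_zero]
      apply Finset.sum_congr rfl
      intro i hi
      rw [Finset.mem_range] at hi
      have hc : (n.choose (i + 1) : ℝ) * ((i + 1 : ℕ) : ℝ) = (n : ℝ) * ((n - 1).choose i : ℝ) := by
        have := Nat.add_one_mul_choose_eq (n - 1) i
        rw [Nat.sub_add_cancel hn] at this
        exact_mod_cast this.symm
      have h1 : i + 1 - 1 = i := by omega
      have h2 : n - (i + 1) = n - 1 - i := by omega
      rw [h1, h2]
      push_cast at hc ⊢
      linear_combination (p ^ i * (1 - p) ^ (n - 1 - i) * a (i + 2)) * hc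
    have hB : ∑ i ∈ Finset.range (n + 1),
        (n.choose i : ℝ) * ((n - i : ℕ) : ℝ) * p ^ i * (1 - p) ^ (n - i - 1) * a (i + 1)
        = ∑ i ∈ Finset.range n,
        (n : ℝ) * ((n - 1).choose i : ℝ) * p ^ i * (1 - p) ^ (n - 1 - i) * a (i + 1) := by
      rw [Finset.sum_range_succ]
      simp only [Nat.sub_self, Nat.cast_zero, mul_zero, zero_mul, add_zero]
      apply Finset.sum_congr rfl
      intro i hi
      rw [Finset.mem_range] at hi
      have hc : (n.choose i : ℝ) * ((n - i : ℕ) : ℝ) = (n : ℝ) * ((n - 1).choose i : ℝ) := by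
        have h1 := Nat.add_one_mul_choose_eq (n - 1) i
        rw [Nat.sub_add_cancel hn] at h1
        have h2 := Nat.choose_succ_right_eq n i
        exact_mod_cast (h1.trans h2).symm
      have h2 : n - i - 1 = n - 1 - i := by omega
      rw [h2]
      linear_combination (p ^ i * (1 - p) ^ (n - 1 - i) * a (i + 1)) * hc
    rw [hA, hB, ← Finset.sum_sub_distrib]
    apply Finset.sum_congr rfl
    intro i _; ring
  apply strictAntiOn_of_deriv_neg (convex_Icc 0 1)
  · exact fun x _ => ((hderiv x).differentiableAt.continuousAt).continuousWithinAt
  · intro x hx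
    rw [interior_Icc] at hx
    rw [(hderiv x).deriv, hg]
    apply Finset.sum_neg
    · intro i hi
      rw [Finset.mem_range] at hi
      have hpos1 : (0 : ℝ) < (n : ℝ) * ((n - 1).choose i : ℝ) := by
        have : 0 < (n - 1).choose i := Nat.choose_pos (by omega)
        positivity
      have hx1 : (0 : ℝ) < x ^ i := pow_pos hx.1 _
      have hx2 : (0 : ℝ) < (1 - x) ^ (n - 1 - i) := pow_pos (by linarith [hx.2]) _
      have hneg : a (i + 2) - a (i + 1) < 0 := by
        have := ha (i + 1) (by omega) (by omega)
        linarith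
      have := mul_pos (mul_pos hpos1 hx1) hx2
      nlinarith
    · exact ⟨0, Finset.mem_range.mpr hn⟩
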